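/- Let f : ℂ^n → ℂ and Θ : ℂ^n → ℂ^n be analytic, let φ : ℂ × ℂ^n → ℂ^n be a global complex-time flow of Θ, and let g : ℂ^n × ℂ → ℂ be analytic with f(φ(t,x)) = f(x) + t·g(x,t) for all t, x. Define Φ : ℂ × (ℂ × ℂ × ℂ^n) → ℂ × ℂ × ℂ^n by Φ(t,(u,v,x)) = (u + t·g(x,tv), v, φ(tv,x)). Then: (i) Φ(0,p) = p for all p; (ii) ∂Φ/∂t(t,(u,v,x)) = Θ_u(Φ(t,(u,v,x))) for all t ∈ ℂ and (u,v,x) ∈ ℂ^{2+n}, where Θ_u is the lifted vector field of Θ; and (iii) if uv = f(x) then the point Φ(t,(u,v,x)) again satisfies the equation, i.e. (u + t·g(x,tv))·v = f(φ(tv,x)). Hence Θ_u is a complete vector field on the suspension {uv = f(x)}. -/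

import Mathlib

/-- Let `φ` be a global complex-time flow of the holomorphic vector field `Θ`
on `ℂ^n`, `f : ℂ^n → ℂ` holomorphic, and `g` holomorphic with `f (φ t x) = f x + t * g (x,t)`.
Then `Φ t (u,v,x) = (u + t * g (x, t*v), v, φ (t*v) x)` satisfies: (i) `Φ 0 = id`;
(ii) `∂Φ/∂t (t,p) = Θ_u (Φ t p)` where `Θ_u (u,v,x) = (Df_x(Θ x), 0, v • Θ x)` is the lifted
field; (iii) `Φ t` preserves the suspension `{uv = f x}`. Hence `Θ_u` is complete on the
suspension. -/
theorem stmt_3 (n : ℕ) (f : (Fin n → ℂ) → ℂ) (Θ : (Fin n → ℂ) → (Fin n → ℂ))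
    (hf : Differentiable ℂ f) (hΘ : Differentiable ℂ Θ)
    (φ : ℂ → (Fin n → ℂ) → (Fin n → ℂ))
    (hφ0 : ∀ x, φ 0 x = x)
    (hφ : ∀ (t : ℂ) (x : Fin n → ℂ), HasDerivAt (fun s => φ s x) (Θ (φ t x)) t)
    (g : (Fin n → ℂ) × ℂ → ℂ) (hg : Differentiable ℂ g)
    (hfg : ∀ (t : ℂ) (x : Fin n → ℂ), f (φ t x) = f x + t * g (x, t))
    (Θu : ℂ × ℂ × (Fin n → ℂ) → ℂ × ℂ × (Fin n → ℂ))
    (hΘu : ∀ (u v : ℂ) (x : Fin n → ℂ), Θu (u, v, x) = (fderiv ℂ f x (Θ x), 0, v • Θ x))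
    (Φ : ℂ → ℂ × ℂ × (Fin n → ℂ) → ℂ × ℂ × (Fin n → ℂ))
    (hΦ : ∀ (t u v : ℂ) (x : Fin n → ℂ),
      Φ t (u, v, x) = (u + t * g (x, t * v), v, φ (t * v) x)) :
    (∀ p, Φ 0 p = p) ∧
    (∀ (t : ℂ) (p : ℂ × ℂ × (Fin n → ℂ)), HasDerivAt (fun s => Φ s p) (Θu (Φ t p)) t) ∧
    (∀ (t u v : ℂ) (x : Fin n → ℂ), u * v = f x →
      (u + t * g (x, t * v)) * v = f (φ (t * v) x)) := by
  refine ⟨?_, ?_, ?_⟩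
  · rintro ⟨u, v, x⟩
    simp [hΦ, hφ0]
  · rintro t ⟨u, v, x⟩
    -- derivative of third component
    have hψ : HasDerivAt (fun s => φ (s * v) x) (v • Θ (φ (t * v) x)) t := by
      have h := (hφ (t * v) x).scomp t (hasDerivAt_mul_const v)
      simpa [Function.comp_def] using h
    set D := fderiv ℂ f (φ (t * v) x) (Θ (φ (t * v) x)) with hD
    have hgd : Differentiable ℂ (fun s : ℂ => g (x, s * v)) :=
      hg.comp ((differentiable_const x).prodMk (differentiable_id.mul_const v))
    have hAd : Differentiable ℂ (fun s : ℂ => s * g (x, s * v)) :=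
      differentiable_id.mul hgd
    have hA : HasDerivAt (fun s : ℂ => s * g (x, s * v)) D t := by
      by_cases hv : v = 0
      · -- v = 0 case: derivative is g (x, 0), show it equals D = fderiv f x (Θ x)
        subst hv
        simp only [mul_zero] at *
        have h1 : HasDerivAt (fun τ : ℂ => f (φ τ x)) (fderiv ℂ f x (Θ x)) 0 := by
          have := ((hf (φ 0 x)).hasFDerivAt).comp_hasDerivAt 0 (hφ 0 x)
          simpa [hφ0, Function.comp_def] using this
        have hg0 : HasDerivAt (fun τ : ℂ => g (x, τ))
            (fderiv ℂ (fun τ : ℂ => g (x, τ)) 0 1) 0 := by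
          have : Differentiable ℂ (fun τ : ℂ => g (x, τ)) :=
            hg.comp ((differentiable_const x).prodMk differentiable_id)
          simpa [hasDerivAt_iff_hasFDerivAt] using ((this 0).hasFDerivAt.hasDerivAt)
        have h2 : HasDerivAt (fun τ : ℂ => f x + τ * g (x, τ))
            (g (x, 0) + 0 * fderiv ℂ (fun τ : ℂ => g (x, τ)) 0 1) 0 := by
          have := ((hasDerivAt_id (0:ℂ)).mul hg0).const_add (f x)
          simpa using this
        have heq : (fun τ : ℂ => f (φ τ x)) = fun τ : ℂ => f x + τ * g (x, τ) := by
          funext τ; exact hfg τ x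
        rw [heq] at h1
        have hDg : fderiv ℂ f x (Θ x) = g (x, 0) := by
          have := h1.unique h2; simpa using this
        have h3 : HasDerivAt (fun s : ℂ => s * g (x, 0)) (g (x, 0)) t := by
          simpa using (hasDerivAt_id t).mul_const (g (x, 0))
        simp only [hD, hφ0, hDg]
        exact h3
      · have hA' : HasDerivAt (fun s : ℂ => s * g (x, s * v))
            (deriv (fun s : ℂ => s * g (x, s * v)) t) t := (hAd t).hasDerivAt
        have hF1 : HasDerivAt (fun s : ℂ => f x + v * (s * g (x, s * v)))
            (v * deriv (fun s : ℂ => s * g (x, s * v)) t) t :=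
          (hA'.const_mul v).const_add (f x)
        have hF2 : HasDerivAt (fun s : ℂ => f (φ (s * v) x)) (v * D) t := by
          have := ((hf (φ (t * v) x)).hasFDerivAt).comp_hasDerivAt t hψ
          simpa [hD, Function.comp_def, map_smul, smul_eq_mul] using this
        have heq : (fun s : ℂ => f (φ (s * v) x))
            = fun s : ℂ => f x + v * (s * g (x, s * v)) := by
          funext s; rw [hfg]; ring
        rw [heq] at hF2
        have : v * D = v * deriv (fun s : ℂ => s * g (x, s * v)) t := hF2.unique hF1
        have hDe : deriv (fun s : ℂ => s * g (x, s * v)) t = D :=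
          (mul_left_cancel₀ hv this).symm
        rw [← hDe]; exact hA'
    have key : HasDerivAt (fun s : ℂ => ((u + s * g (x, s * v), v, φ (s * v) x) : ℂ × ℂ × (Fin n → ℂ)))
        (D, 0, v • Θ (φ (t * v) x)) t :=
      (hA.const_add u).prodMk ((hasDerivAt_const t v).prodMk hψ)
    simp only [hΦ, hΘu]
    exact key
  · intro t u v x h
    rw [hfg (t * v) x, ← h]; ring
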